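/- Let A be a real symmetric n×n matrix, B a real symmetric positive definite n×n matrix, ω a nonzero real number, and M := ω⁻¹B. Let B^{1/2} denote the positive semidefinite square root of B and let λ_max be the greatest element of the real spectrum of the symmetric matrix B^{−1/2}·A·B^{−1/2} (i.e., λ_max is an eigenvalue of B^{−1/2}·A·B^{−1/2} and every eigenvalue of B^{−1/2}·A·B^{−1/2} is at most λ_max). Then 2M − A is symmetric positive definite if and only if: (i) when λ_max > 0, ω ∈ (0, 2/λ_max); (ii) when λ_max < 0, ω < 2/λ_max or ω > 0 (i.e., ω ∉ [2/λ_max, 0]); (iii) when λ_max = 0, ω > 0. -/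

import Mathlib

open Matrix Pointwise

lemma arith_aux (ω lmax : ℝ) (hω : ω ≠ 0) : lmax < 2 * ω⁻¹ ↔
      ((0 < lmax ∧ 0 < ω ∧ ω < 2 / lmax) ∨
       (lmax < 0 ∧ (ω < 2 / lmax ∨ 0 < ω)) ∨
       (lmax = 0 ∧ 0 < ω)) := by
  have h1 : ω * ω⁻¹ = 1 := mul_inv_cancel₀ hω
  rw [div_eq_mul_inv]
  rcases hω.lt_or_gt with hneg | hpos
  · have hinv : ω⁻¹ < 0 := inv_neg''.mpr hneg
    constructor
    · intro h
      have hl : lmax < 0 := by nlinarith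
      have h2 : lmax * lmax⁻¹ = 1 := mul_inv_cancel₀ hl.ne
      have hlinv : lmax⁻¹ < 0 := inv_neg''.mpr hl
      exact Or.inr (Or.inl ⟨hl, Or.inl (by nlinarith)⟩)
    · rintro (⟨h0, hω', _⟩ | ⟨hl, (hlt | hω')⟩ | ⟨h0, hω'⟩)
      · linarith
      · have h2 : lmax * lmax⁻¹ = 1 := mul_inv_cancel₀ hl.ne
        have hlinv : lmax⁻¹ < 0 := inv_neg''.mpr hl
        nlinarith
      · linarith
      · linarith
  · have hinv : 0 < ω⁻¹ := inv_pos.mpr hpos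
    constructor
    · intro h
      rcases lt_trichotomy lmax 0 with hl | hl | hl
      · exact Or.inr (Or.inl ⟨hl, Or.inr hpos⟩)
      · exact Or.inr (Or.inr ⟨hl, hpos⟩)
      · have h2 : lmax * lmax⁻¹ = 1 := mul_inv_cancel₀ hl.ne'
        have hlinv : 0 < lmax⁻¹ := inv_pos.mpr hl
        exact Or.inl ⟨hl, hpos, by nlinarith⟩
    · rintro (⟨h0, hω', hlt⟩ | ⟨hl, _⟩ | ⟨h0, _⟩)
      · have h2 : lmax * lmax⁻¹ = 1 := mul_inv_cancel₀ h0.ne'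
        have hlinv : 0 < lmax⁻¹ := inv_pos.mpr h0
        nlinarith
      · nlinarith
      · nlinarith [h0]


-- For a real symmetric matrix C whose real spectrum is bounded above by lmax,
-- with lmax in the spectrum, t•1 - C has positive quadratic form iff lmax < t.
lemma spec_key {n : ℕ} (C : Matrix (Fin n) (Fin n) ℝ) (hC : C.IsHermitian) (lmax t : ℝ)
    (hmem : lmax ∈ spectrum ℝ C) (hmax : ∀ lam ∈ spectrum ℝ C, lam ≤ lmax) :
    (∀ w : Fin n → ℝ, w ≠ 0 → 0 < w ⬝ᵥ ((t • (1 : Matrix (Fin n) (Fin n) ℝ) - C) *ᵥ w)) ↔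
      lmax < t := by
  have halg : (algebraMap ℝ (Matrix (Fin n) (Fin n) ℝ)) lmax
      = lmax • (1 : Matrix (Fin n) (Fin n) ℝ) := Algebra.algebraMap_eq_smul_one lmax
  constructor
  · intro h
    -- extract an eigenvector for lmax
    have hdet : (lmax • (1 : Matrix (Fin n) (Fin n) ℝ) - C).det = 0 := by
      have := spectrum.mem_iff.mp hmem
      rw [halg] at this
      by_contra hd
      exact this ((Matrix.isUnit_iff_isUnit_det _).mpr (isUnit_iff_ne_zero.mpr hd))
    obtain ⟨v, hv0, hv⟩ := (Matrix.exists_mulVec_eq_zero_iff).mpr hdet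
    have hpos := h v hv0
    have hsplit : (t • (1 : Matrix (Fin n) (Fin n) ℝ) - C)
        = (t - lmax) • (1 : Matrix (Fin n) (Fin n) ℝ)
          + (lmax • (1 : Matrix (Fin n) (Fin n) ℝ) - C) := by
      rw [sub_smul]; abel
    rw [hsplit, add_mulVec, dotProduct_add, hv, dotProduct_zero, add_zero,
      smul_mulVec, one_mulVec, dotProduct_smul, smul_eq_mul] at hpos
    have hvv : 0 < v ⬝ᵥ v := by
      have := Matrix.dotProduct_star_self_pos_iff (v := v) |>.mpr hv0
      simpa using this
    nlinarith
  · intro ht w hw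
    -- lmax•1 - C is PosSemidef
    have hMherm : (lmax • (1 : Matrix (Fin n) (Fin n) ℝ) - C).IsHermitian := by
      unfold Matrix.IsHermitian
      rw [conjTranspose_sub, conjTranspose_smul, conjTranspose_one, star_trivial, hC.eq]
    have hps : (lmax • (1 : Matrix (Fin n) (Fin n) ℝ) - C).PosSemidef := by
      apply hMherm.posSemidef_iff_eigenvalues_nonneg.mpr
      intro i
      have hmu := hMherm.eigenvalues_mem_spectrum_real i
      have hmu' : hMherm.eigenvalues i ∈ ({lmax} : Set ℝ) - spectrum ℝ C := by
        rw [spectrum.singleton_sub_eq, halg]; exact hmu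
      obtain ⟨a, ha, b, hb, hab⟩ := Set.mem_sub.mp hmu'
      rw [Set.mem_singleton_iff] at ha
      subst ha
      have := hmax b hb
      rw [Pi.zero_apply]
      linarith [hab ▸ sub_nonneg.mpr this]
    have hq := hps.re_dotProduct_nonneg w
    have hstar : star w = w := by
      funext i; simp
    rw [hstar] at hq
    have hvv : 0 < w ⬝ᵥ w := by
      have := Matrix.dotProduct_star_self_pos_iff (v := w) |>.mpr hw
      simpa using this
    have hsplit : (t • (1 : Matrix (Fin n) (Fin n) ℝ) - C)
        = (t - lmax) • (1 : Matrix (Fin n) (Fin n) ℝ)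
          + (lmax • (1 : Matrix (Fin n) (Fin n) ℝ) - C) := by
      rw [sub_smul]; abel
    rw [hsplit, add_mulVec, dotProduct_add, smul_mulVec, one_mulVec,
      dotProduct_smul, smul_eq_mul]
    have : RCLike.re (w ⬝ᵥ ((lmax • (1 : Matrix (Fin n) (Fin n) ℝ) - C) *ᵥ w)) =
        w ⬝ᵥ ((lmax • (1 : Matrix (Fin n) (Fin n) ℝ) - C) *ᵥ w) := rfl
    nlinarith [hq]

/-- A real symmetric matrix is positive definite: `vᵀPv > 0` for all nonzero `v`. -/
def Matrix.IsPD {n : ℕ} (P : Matrix (Fin n) (Fin n) ℝ) : Prop :=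
  Pᵀ = P ∧ ∀ v : Fin n → ℝ, v ≠ 0 → 0 < v ⬝ᵥ (P *ᵥ v)

theorem stmt_11 {n : ℕ} (A B S : Matrix (Fin n) (Fin n) ℝ)
    (hA : Aᵀ = A) (hB : B.IsPD)
    -- `S` is the positive semidefinite square root `B^{1/2}` of `B`
    (hS : Sᵀ = S) (hSpsd : ∀ v : Fin n → ℝ, 0 ≤ v ⬝ᵥ (S *ᵥ v)) (hSsq : S * S = B)
    (ω : ℝ) (hω : ω ≠ 0)
    -- `lmax` is the greatest element of the real spectrum of `B^{-1/2} A B^{-1/2}`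
    (lmax : ℝ)
    (hmem : lmax ∈ spectrum ℝ (S⁻¹ * A * S⁻¹))
    (hmax : ∀ lam ∈ spectrum ℝ (S⁻¹ * A * S⁻¹), lam ≤ lmax) :
    ((2 : ℝ) • (ω⁻¹ • B) - A).IsPD ↔
      ((0 < lmax ∧ 0 < ω ∧ ω < 2 / lmax) ∨
       (lmax < 0 ∧ (ω < 2 / lmax ∨ 0 < ω)) ∨
       (lmax = 0 ∧ 0 < ω)) := by
  set C := S⁻¹ * A * S⁻¹ with hCdef
  set t := 2 * ω⁻¹ with htdef
  -- B has nonzero determinant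
  have hdetB : B.det ≠ 0 := by
    intro hd
    obtain ⟨v, hv0, hv⟩ := (Matrix.exists_mulVec_eq_zero_iff).mpr hd
    have := hB.2 v hv0
    rw [hv] at this
    simp at this
  have hdetS : S.det ≠ 0 := by
    intro hd
    apply hdetB
    rw [← hSsq, det_mul, hd, mul_zero]
  have hSu : IsUnit S.det := isUnit_iff_ne_zero.mpr hdetS
  have hinv1 : S⁻¹ * S = 1 := nonsing_inv_mul S hSu
  have hinv2 : S * S⁻¹ = 1 := mul_nonsing_inv S hSu
  have hSinvT : (S⁻¹)ᵀ = S⁻¹ := by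
    rw [transpose_nonsing_inv, hS]
  -- C is hermitian
  have hCherm : C.IsHermitian := by
    unfold Matrix.IsHermitian
    rw [conjTranspose_eq_transpose_of_trivial, hCdef, transpose_mul, transpose_mul,
      hSinvT, hA, mul_assoc]
  -- quadratic form identity
  have hquad : ∀ v : Fin n → ℝ,
      v ⬝ᵥ (((2 : ℝ) • (ω⁻¹ • B) - A) *ᵥ v)
        = (S *ᵥ v) ⬝ᵥ ((t • (1 : Matrix (Fin n) (Fin n) ℝ) - C) *ᵥ (S *ᵥ v)) := by
    intro v
    have hBv : v ⬝ᵥ (B *ᵥ v) = (S *ᵥ v) ⬝ᵥ (S *ᵥ v) := by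
      rw [← hSsq, ← mulVec_mulVec, dotProduct_mulVec (v := v) (w := S *ᵥ v), ← hS,
        vecMul_transpose, hS]
    have hAv : (S *ᵥ v) ⬝ᵥ (C *ᵥ (S *ᵥ v)) = v ⬝ᵥ (A *ᵥ v) := by
      have h1 : C *ᵥ (S *ᵥ v) = S⁻¹ *ᵥ (A *ᵥ v) := by
        rw [mulVec_mulVec, hCdef, mul_assoc, mul_assoc, hinv1, mul_one, ← mulVec_mulVec]
      rw [h1, dotProduct_mulVec, ← hSinvT, vecMul_transpose, mulVec_mulVec, hinv1, one_mulVec]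
    rw [sub_mulVec, sub_mulVec, dotProduct_sub, dotProduct_sub, hAv, smul_smul,
      smul_mulVec, smul_mulVec, one_mulVec, dotProduct_smul, dotProduct_smul,
      hBv]
  -- symmetry of the matrix in question
  have hsym : ((2 : ℝ) • (ω⁻¹ • B) - A)ᵀ = (2 : ℝ) • (ω⁻¹ • B) - A := by
    rw [transpose_sub, transpose_smul, transpose_smul, hB.1, hA]
  -- the positivity condition transfers
  have hiff : ((2 : ℝ) • (ω⁻¹ • B) - A).IsPD ↔
      (∀ w : Fin n → ℝ, w ≠ 0 →
        0 < w ⬝ᵥ ((t • (1 : Matrix (Fin n) (Fin n) ℝ) - C) *ᵥ w)) := by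
    constructor
    · rintro ⟨-, hpd⟩ w hw
      have hv0 : S⁻¹ *ᵥ w ≠ 0 := by
        intro h0
        apply hw
        have : S *ᵥ (S⁻¹ *ᵥ w) = w := by rw [mulVec_mulVec, hinv2, one_mulVec]
        rw [h0] at this
        rw [← this, mulVec_zero]
      have := hpd _ hv0
      rwa [hquad, mulVec_mulVec, hinv2, one_mulVec] at this
    · intro h
      refine ⟨hsym, fun v hv => ?_⟩
      rw [hquad]
      apply h
      intro h0
      apply hv
      have : S⁻¹ *ᵥ (S *ᵥ v) = v := by rw [mulVec_mulVec, hinv1, one_mulVec]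
      rw [h0, mulVec_zero] at this
      exact this.symm
  rw [hiff, spec_key C hCherm lmax t hmem hmax, htdef, arith_aux ω lmax hω]
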